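/- Let k, m be positive integers with gcd(k, m) = 1, let q = 2^k, and let α ∈ F_{2^m} be such that x^{q+1} + x + α has no root in F_{2^m}. Then the function F : F_{2^m} × F_{2^m} → F_{2^m} × F_{2^m} defined by F(x, y) = (x^{q+1} + x·y^q + α·y^{q+1}, x^{q²+1} + α·x^{q²}·y + (1+α)^q·x·y^{q²} + α·y^{q²+1}) is almost perfect nonlinear (APN). -/

import Mathlib

/-- If `f(x,y) = σx·x + x·σy + α·σy·y` vanishes then `(x,y) = (0,0)`,
provided `X^{q+1} + X + α` has no root. -/
private lemma apn_fzero {K : Type*} [Field K] (σ : K →+* K) (α : K)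
    (hroot : ∀ t : K, σ t * t + t + α ≠ 0) (X Y : K)
    (h : σ X * X + X * σ Y + α * (σ Y * Y) = 0) : X = 0 ∧ Y = 0 := by
  by_cases hY : Y = 0
  · subst hY
    simp only [map_zero, mul_zero, zero_mul, add_zero] at h
    rcases mul_eq_zero.mp h with h1 | h1
    · exact ⟨σ.injective (by rw [h1, map_zero]), rfl⟩
    · exact ⟨h1, rfl⟩
  · exfalso
    have hsY : σ Y ≠ 0 := fun hz => hY (σ.injective (by rw [hz, map_zero]))
    apply hroot (X * Y⁻¹)
    have e1 : σ (X * Y⁻¹) = σ X * (σ Y)⁻¹ := by rw [map_mul, map_inv₀]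
    rw [e1]
    have key : (σ X * (σ Y)⁻¹ * (X * Y⁻¹) + X * Y⁻¹ + α) * (σ Y * Y)
        = σ X * X + X * σ Y + α * (σ Y * Y) := by
      field_simp
    have h0 : (σ X * (σ Y)⁻¹ * (X * Y⁻¹) + X * Y⁻¹ + α) * (σ Y * Y) = 0 := key.trans h
    exact (mul_eq_zero.mp h0).resolve_right (mul_ne_zero hsY hY)

/-- Kernel lemma, case `b = 0` (scaled so that `a = 1`). -/
private lemma apn_kernelB0 {K : Type*} [Field K] (htwo : (2 : K) = 0) (σ : K →+* K) (α x y : K)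
    (hfix : ∀ t : K, σ t = t → t = 0 ∨ t = 1)
    (hroot : ∀ t : K, σ t * t + t + α ≠ 0)
    (hE1 : σ x + x + σ y = 0)
    (hE2 : σ (σ x) + x + (1 + σ α) * σ (σ y) + α * y = 0) :
    (x = 0 ∧ y = 0) ∨ (x = 1 ∧ y = 0) := by
  have hσE1 : σ (σ x + x + σ y) = 0 := by rw [hE1, map_zero]
  have hE1q : σ (σ x) + σ x + σ (σ y) = 0 := by
    rw [← hσE1]; simp only [map_add]
  have keyphi : σ (σ x) * σ x + σ x * σ (σ y) + σ α * (σ (σ y) * σ y)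
      = σ x * x + x * σ y + α * (σ y * y) := by
    linear_combination (α * y + σ α * σ (σ y) + x) * hE1 + (x) * hE1q + (σ x + x) * hE2 + ((-1 : K) * α * σ x * y + (-1 : K) * α * σ y * y + (-1 : K) * α * x * y + (-1 : K) * σ α * σ (σ y) * σ x + (-1 : K) * σ α * σ (σ y) * x + (-1 : K) * σ (σ x) * x + (-1 : K) * σ (σ y) * x + (-2 : K) * σ x * x + (-1 : K) * σ y * x + (-1 : K) * x * x) * htwo
  have hpushphi : σ (σ x * x + x * σ y + α * (σ y * y))
      = σ (σ x) * σ x + σ x * σ (σ y) + σ α * (σ (σ y) * σ y) := by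
    simp only [map_add, map_mul]
  have hρ : σ (σ x * x + x * σ y + α * (σ y * y)) = σ x * x + x * σ y + α * (σ y * y) :=
    hpushphi.trans keyphi
  rcases hfix _ hρ with hphi0 | hphi1
  · exact Or.inl (apn_fzero σ α hroot x y hphi0)
  · have hf2 : (σ x + 1) * (x + 1) + (x + 1) * σ y + α * (σ y * y) = 0 := by
      linear_combination hphi1 + hE1 + ((1 : K)) * htwo
    obtain ⟨hx1, hy0⟩ := apn_fzero σ α hroot (x + 1) y
      (by simp only [map_add, map_one]; linear_combination hf2)
    exact Or.inr ⟨by linear_combination hx1 - htwo, hy0⟩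

/-- Kernel lemma, case `b ≠ 0` (scaled so that `b = 1`). -/
private lemma apn_kernelB1 {K : Type*} [Field K] (htwo : (2 : K) = 0) (σ : K →+* K) (α a x y : K)
    (hfix : ∀ t : K, σ t = t → t = 0 ∨ t = 1)
    (hroot : ∀ t : K, σ t * t + t + α ≠ 0)
    (hE1 : a * σ x + (σ a + 1) * x + (a + α) * σ y + α * y = 0)
    (hE2 : (a + α) * σ (σ x) + (σ (σ a) + 1 + σ α) * x + ((1 + σ α) * a + α) * σ (σ y)
        + α * ((σ (σ a) + 1) * y) = 0) :
    (x = 0 ∧ y = 0) ∨ (x = a ∧ y = 1) := by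
  have hσE1 : σ (a * σ x + (σ a + 1) * x + (a + α) * σ y + α * y) = 0 := by rw [hE1, map_zero]
  have hE1q : σ a * σ (σ x) + (σ (σ a) + 1) * σ x + (σ a + σ α) * σ (σ y) + σ α * σ y = 0 := by
    rw [← hσE1]; simp only [map_add, map_mul, map_one]
  have hh0 : σ a * a + a + α ≠ 0 := hroot a
  have hσh0 : σ (σ a * a + a + α) = σ (σ a) * σ a + σ a + σ α := by
    simp only [map_add, map_mul]
  have hh1 : σ (σ a) * σ a + σ a + σ α ≠ 0 := by
    rw [← hσh0]
    exact fun hz => hh0 (σ.injective (by rw [hz, map_zero]))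
  -- η and its Frobenius
  have key : ((σ (σ x) + σ (σ a) * σ (σ y)) * (σ x + σ a * σ y)
        + (σ (σ a) + 1) * ((σ (σ y) + σ y) * (σ x + σ a * σ y))
        + (σ (σ a) * σ a + σ a + σ α) * (σ y * σ y)) * (σ a * a + a + α)
      = ((σ x + σ a * σ y) * (x + a * y) + (σ a + 1) * ((σ y + y) * (x + a * y))
        + (σ a * a + a + α) * (y * y)) * (σ (σ a) * σ a + σ a + σ α) := by
    linear_combination ((2 : K) * σ a * σ (σ a) * σ y + σ a * σ (σ a) * y + (2 : K) * σ a * σ y + σ a * y + σ α * σ y + σ α * y + σ (σ a) * σ x + σ x) * hE1 + (a * σ a * σ y + a * σ x) * hE1q + (σ a * σ y + σ x) * hE2 + (a * σ a * σ a * σ (σ a) * σ (σ y) * σ y + a * σ a * σ a * σ (σ a) * σ y * σ y + (-1 : K) * a * σ a * σ a * σ (σ a) * σ y * y + (-1 : K) * a * σ a * σ a * σ (σ a) * y * y + a * σ a * σ a * σ y * σ y + (-1 : K) * a * σ a * σ a * σ y * y + (-1 : K) * a * σ a * σ a * y * y + (-1 : K) * a * σ a * σ α * σ (σ y) * σ y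 + (-1 : K) * a * σ a * σ α * σ y * y + (-1 : K) * a * σ a * σ α * y * y + a * σ a * σ (σ a) * σ (σ y) * σ x + a * σ a * σ (σ a) * σ (σ y) * σ y + (-1 : K) * a * σ a * σ (σ a) * σ x * σ y + (-1 : K) * a * σ a * σ (σ a) * σ x * y + (-1 : K) * a * σ a * σ (σ a) * σ y * y + (-1 : K) * a * σ a * σ (σ a) * y * y + (-1 : K) * a * σ a * σ x * σ y + (-1 : K) * a * σ a * σ x * y + (-1 : K) * a * σ a * σ y * y + (-1 : K) * a * σ a * y * y + (-1 : K) * a * σ α * σ (σ y) * σ x + (-1 : K) * a * σ α * σ x * σ y + (-1 : K) * a * σ α * σ x * y + (-1 : K) * a * σ α * σ y * y + (-1 : K) * a * σ α * y * y + a * σ (σ a) * σ (σ y) * σ x + (-1 : K) * a * σ (σ a) * σ x * σ x + (-1 : K) * a * σ x * σ x + α * σ a * σ (σ a) * σ (σ y) * σ y + (-2 : K) * α * σ a * σ (σ a) * σ y * y + (-1 : K) * α * σ a * σ (σ a) * y * y + (-2 : K) * α * σ a * σ y * y + (-1 : K) * α * σ a * y * y + (-1 : K) * α * σ α * σ y *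 y + (-1 : K) * α * σ α * y * y + α * σ (σ a) * σ (σ y) * σ x + (-1 : K) * α * σ (σ a) * σ x * y + (-1 : K) * α * σ x * y + (-2 : K) * σ a * σ a * σ (σ a) * σ y * x + (-1 : K) * σ a * σ a * σ (σ a) * x * y + (-2 : K) * σ a * σ a * σ y * x + (-1 : K) * σ a * σ a * x * y + (-2 : K) * σ a * σ α * σ y * x + (-1 : K) * σ a * σ α * x * y + (-1 : K) * σ a * σ (σ a) * σ x * x + (-2 : K) * σ a * σ (σ a) * σ y * x + (-1 : K) * σ a * σ (σ a) * x * y + (-1 : K) * σ a * σ x * x + (-2 : K) * σ a * σ y * x + (-1 : K) * σ a * x * y + (-1 : K) * σ α * σ x * x + (-1 : K) * σ α * σ y * x + (-1 : K) * σ α * x * y + (-1 : K) * σ (σ a) * σ x * x + (-1 : K) * σ x * x) * htwo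
  have hpush : σ ((σ x + σ a * σ y) * (x + a * y) + (σ a + 1) * ((σ y + y) * (x + a * y))
        + (σ a * a + a + α) * (y * y))
      = (σ (σ x) + σ (σ a) * σ (σ y)) * (σ x + σ a * σ y)
        + (σ (σ a) + 1) * ((σ (σ y) + σ y) * (σ x + σ a * σ y))
        + (σ (σ a) * σ a + σ a + σ α) * (σ y * σ y) := by
    simp only [map_add, map_mul, map_one]
  have keyσ : σ ((σ x + σ a * σ y) * (x + a * y) + (σ a + 1) * ((σ y + y) * (x + a * y))
        + (σ a * a + a + α) * (y * y)) * (σ a * a + a + α)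
      = ((σ x + σ a * σ y) * (x + a * y) + (σ a + 1) * ((σ y + y) * (x + a * y))
        + (σ a * a + a + α) * (y * y)) * (σ (σ a) * σ a + σ a + σ α) := by
    rw [hpush]; exact key
  -- η/h is fixed by σ
  have hρ : σ (((σ x + σ a * σ y) * (x + a * y) + (σ a + 1) * ((σ y + y) * (x + a * y))
        + (σ a * a + a + α) * (y * y)) * (σ a * a + a + α)⁻¹)
      = ((σ x + σ a * σ y) * (x + a * y) + (σ a + 1) * ((σ y + y) * (x + a * y))
        + (σ a * a + a + α) * (y * y)) * (σ a * a + a + α)⁻¹ := by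
    rw [map_mul, map_inv₀, hσh0]
    rw [mul_comm _ ((σ (σ a) * σ a + σ a + σ α)⁻¹),
      mul_comm _ ((σ a * a + a + α)⁻¹), inv_mul_eq_div, inv_mul_eq_div,
      div_eq_div_iff hh1 hh0]
    exact keyσ
  rcases hfix _ hρ with hcase | hcase
  · have heta0 : (σ x + σ a * σ y) * (x + a * y) + (σ a + 1) * ((σ y + y) * (x + a * y))
        + (σ a * a + a + α) * (y * y) = 0 :=
      (mul_eq_zero.mp hcase).resolve_right (inv_ne_zero hh0)
    have hf : σ x * x + x * σ y + α * (σ y * y) = 0 := by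
      linear_combination heta0 + (y) * hE1 + ((-1 : K) * a * σ a * σ y * y + (-1 : K) * a * σ a * y * y + (-1 : K) * a * σ x * y + (-1 : K) * a * σ y * y + (-1 : K) * a * y * y + (-1 : K) * α * y * y + (-1 : K) * σ a * σ y * x + (-1 : K) * σ a * x * y + (-1 : K) * x * y) * htwo
    exact Or.inl (apn_fzero σ α hroot x y hf)
  · have hetah : (σ x + σ a * σ y) * (x + a * y) + (σ a + 1) * ((σ y + y) * (x + a * y))
        + (σ a * a + a + α) * (y * y) = σ a * a + a + α := by
      rw [mul_inv_eq_one₀ hh0] at hcase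
      exact hcase
    have hf2 : (σ x + σ a) * (x + a) + (x + a) * (σ y + 1) + α * ((σ y + 1) * (y + 1)) = 0 := by
      linear_combination hetah + ((1 : K) + y) * hE1 + (a + a * σ a + (-1 : K) * a * σ a * σ y * y + (-1 : K) * a * σ a * y * y + (-1 : K) * a * σ x * y + (-1 : K) * a * σ y * y + (-1 : K) * a * y * y + α + (-1 : K) * α * y * y + (-1 : K) * σ a * σ y * x + (-1 : K) * σ a * x * y + (-1 : K) * x * y) * htwo
    obtain ⟨hxa, hyb⟩ := apn_fzero σ α hroot (x + a) (y + 1)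
      (by simp only [map_add, map_one]; linear_combination hf2)
    exact Or.inr ⟨by linear_combination hxa - a * htwo, by linear_combination hyb - htwo⟩

/-- The general kernel lemma: any common kernel element of the two polar forms is `0` or `(a₁,a₂)`. -/
private lemma apn_kernelGen {K : Type*} [Field K] (htwo : (2 : K) = 0) (σ : K →+* K)
    (α a₁ a₂ d₁ d₂ : K)
    (hfix : ∀ t : K, σ t = t → t = 0 ∨ t = 1)
    (hroot : ∀ t : K, σ t * t + t + α ≠ 0)
    (ha : ¬(a₁ = 0 ∧ a₂ = 0))
    (hB1 : a₁ * σ d₁ + (σ a₁ + σ a₂) * d₁ + (a₁ + α * a₂) * σ d₂ + α * (σ a₂ * d₂) = 0)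
    (hB2 : (a₁ + α * a₂) * σ (σ d₁) + (σ (σ a₁) + (1 + σ α) * σ (σ a₂)) * d₁
        + ((1 + σ α) * a₁ + α * a₂) * σ (σ d₂) + α * ((σ (σ a₁) + σ (σ a₂)) * d₂) = 0) :
    (d₁ = 0 ∧ d₂ = 0) ∨ (d₁ = a₁ ∧ d₂ = a₂) := by
  by_cases ha2 : a₂ = 0
  · subst ha2
    have ha1 : a₁ ≠ 0 := fun h => ha ⟨h, rfl⟩
    have hsa1 : σ a₁ ≠ 0 := fun hz => ha1 (σ.injective (by rw [hz, map_zero]))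
    have hssa1 : σ (σ a₁) ≠ 0 := fun hz => hsa1 (σ.injective (by rw [hz, map_zero]))
    simp only [map_zero, add_zero, mul_zero, zero_mul, zero_add] at hB1 hB2
    have e1 : σ (d₁ * a₁⁻¹) = σ d₁ * (σ a₁)⁻¹ := by rw [map_mul, map_inv₀]
    have e2 : σ (d₂ * a₁⁻¹) = σ d₂ * (σ a₁)⁻¹ := by rw [map_mul, map_inv₀]
    have e1' : σ (σ (d₁ * a₁⁻¹)) = σ (σ d₁) * (σ (σ a₁))⁻¹ := by
      simp only [map_mul, map_inv₀]
    have e2' : σ (σ (d₂ * a₁⁻¹)) = σ (σ d₂) * (σ (σ a₁))⁻¹ := by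
      simp only [map_mul, map_inv₀]
    have hE1' : σ (d₁ * a₁⁻¹) + d₁ * a₁⁻¹ + σ (d₂ * a₁⁻¹) = 0 := by
      rw [e1, e2]
      have key : (σ d₁ * (σ a₁)⁻¹ + d₁ * a₁⁻¹ + σ d₂ * (σ a₁)⁻¹) * (a₁ * σ a₁)
          = a₁ * σ d₁ + σ a₁ * d₁ + a₁ * σ d₂ := by
        have hI1 : a₁ * a₁⁻¹ = 1 := mul_inv_cancel₀ ha1
        have hI2 : σ a₁ * (σ a₁)⁻¹ = 1 := mul_inv_cancel₀ hsa1
        linear_combination (d₁ * σ a₁) * hI1 + (a₁ * σ d₁ + a₁ * σ d₂) * hI2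
      exact (mul_eq_zero.mp (key.trans hB1)).resolve_right (mul_ne_zero ha1 hsa1)
    have hE2' : σ (σ (d₁ * a₁⁻¹)) + d₁ * a₁⁻¹ + (1 + σ α) * σ (σ (d₂ * a₁⁻¹))
        + α * (d₂ * a₁⁻¹) = 0 := by
      rw [e1', e2']
      have key : (σ (σ d₁) * (σ (σ a₁))⁻¹ + d₁ * a₁⁻¹ + (1 + σ α) * (σ (σ d₂) * (σ (σ a₁))⁻¹)
            + α * (d₂ * a₁⁻¹)) * (a₁ * σ (σ a₁))
          = a₁ * σ (σ d₁) + σ (σ a₁) * d₁ + (1 + σ α) * a₁ * σ (σ d₂)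
            + α * (σ (σ a₁) * d₂) := by
        have hI1 : a₁ * a₁⁻¹ = 1 := mul_inv_cancel₀ ha1
        have hI3 : σ (σ a₁) * (σ (σ a₁))⁻¹ = 1 := mul_inv_cancel₀ hssa1
        linear_combination (α * d₂ * σ (σ a₁) + d₁ * σ (σ a₁)) * hI1 + (a₁ * σ α * σ (σ d₂) + a₁ * σ (σ d₁) + a₁ * σ (σ d₂)) * hI3
      exact (mul_eq_zero.mp (key.trans hB2)).resolve_right (mul_ne_zero ha1 hssa1)
    rcases apn_kernelB0 htwo σ α (d₁ * a₁⁻¹) (d₂ * a₁⁻¹) hfix hroot hE1' hE2' with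
      ⟨h1, h2⟩ | ⟨h1, h2⟩
    · exact Or.inl ⟨(mul_eq_zero.mp h1).resolve_right (inv_ne_zero ha1),
        (mul_eq_zero.mp h2).resolve_right (inv_ne_zero ha1)⟩
    · exact Or.inr ⟨(mul_inv_eq_one₀ ha1).mp h1,
        (mul_eq_zero.mp h2).resolve_right (inv_ne_zero ha1)⟩
  · have hsa2 : σ a₂ ≠ 0 := fun hz => ha2 (σ.injective (by rw [hz, map_zero]))
    have hssa2 : σ (σ a₂) ≠ 0 := fun hz => hsa2 (σ.injective (by rw [hz, map_zero]))
    have e1 : σ (d₁ * a₂⁻¹) = σ d₁ * (σ a₂)⁻¹ := by rw [map_mul, map_inv₀]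
    have e2 : σ (d₂ * a₂⁻¹) = σ d₂ * (σ a₂)⁻¹ := by rw [map_mul, map_inv₀]
    have e3 : σ (a₁ * a₂⁻¹) = σ a₁ * (σ a₂)⁻¹ := by rw [map_mul, map_inv₀]
    have e1' : σ (σ (d₁ * a₂⁻¹)) = σ (σ d₁) * (σ (σ a₂))⁻¹ := by
      simp only [map_mul, map_inv₀]
    have e2' : σ (σ (d₂ * a₂⁻¹)) = σ (σ d₂) * (σ (σ a₂))⁻¹ := by
      simp only [map_mul, map_inv₀]
    have e3' : σ (σ (a₁ * a₂⁻¹)) = σ (σ a₁) * (σ (σ a₂))⁻¹ := by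
      simp only [map_mul, map_inv₀]
    have hE1' : (a₁ * a₂⁻¹) * σ (d₁ * a₂⁻¹) + (σ (a₁ * a₂⁻¹) + 1) * (d₁ * a₂⁻¹)
        + ((a₁ * a₂⁻¹) + α) * σ (d₂ * a₂⁻¹) + α * (d₂ * a₂⁻¹) = 0 := by
      rw [e1, e2, e3]
      have key : ((a₁ * a₂⁻¹) * (σ d₁ * (σ a₂)⁻¹) + (σ a₁ * (σ a₂)⁻¹ + 1) * (d₁ * a₂⁻¹)
            + ((a₁ * a₂⁻¹) + α) * (σ d₂ * (σ a₂)⁻¹) + α * (d₂ * a₂⁻¹)) * (a₂ * σ a₂)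
          = a₁ * σ d₁ + (σ a₁ + σ a₂) * d₁ + (a₁ + α * a₂) * σ d₂ + α * (σ a₂ * d₂) := by
        have hJ1 : a₂ * a₂⁻¹ = 1 := mul_inv_cancel₀ ha2
        have hJ2 : σ a₂ * (σ a₂)⁻¹ = 1 := mul_inv_cancel₀ hsa2
        linear_combination (a₁ * σ a₂ * σ d₁ * (σ a₂)⁻¹ + a₁ * σ a₂ * σ d₂ * (σ a₂)⁻¹ + α * d₂ * σ a₂ + d₁ * σ a₁ * σ a₂ * (σ a₂)⁻¹ + d₁ * σ a₂) * hJ1 + (a₁ * σ d₁ + a₁ * σ d₂ + a₂ * α * σ d₂ + d₁ * σ a₁) * hJ2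
      exact (mul_eq_zero.mp (key.trans hB1)).resolve_right (mul_ne_zero ha2 hsa2)
    have hE2' : ((a₁ * a₂⁻¹) + α) * σ (σ (d₁ * a₂⁻¹)) + (σ (σ (a₁ * a₂⁻¹)) + 1 + σ α) * (d₁ * a₂⁻¹)
        + ((1 + σ α) * (a₁ * a₂⁻¹) + α) * σ (σ (d₂ * a₂⁻¹))
        + α * ((σ (σ (a₁ * a₂⁻¹)) + 1) * (d₂ * a₂⁻¹)) = 0 := by
      rw [e1', e2', e3']
      have key : (((a₁ * a₂⁻¹) + α) * (σ (σ d₁) * (σ (σ a₂))⁻¹)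
            + (σ (σ a₁) * (σ (σ a₂))⁻¹ + 1 + σ α) * (d₁ * a₂⁻¹)
            + ((1 + σ α) * (a₁ * a₂⁻¹) + α) * (σ (σ d₂) * (σ (σ a₂))⁻¹)
            + α * ((σ (σ a₁) * (σ (σ a₂))⁻¹ + 1) * (d₂ * a₂⁻¹))) * (a₂ * σ (σ a₂))
          = (a₁ + α * a₂) * σ (σ d₁) + (σ (σ a₁) + (1 + σ α) * σ (σ a₂)) * d₁
            + ((1 + σ α) * a₁ + α * a₂) * σ (σ d₂) + α * ((σ (σ a₁) + σ (σ a₂)) * d₂) := by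
        have hJ1 : a₂ * a₂⁻¹ = 1 := mul_inv_cancel₀ ha2
        have hJ3 : σ (σ a₂) * (σ (σ a₂))⁻¹ = 1 := mul_inv_cancel₀ hssa2
        linear_combination (a₁ * σ α * σ (σ a₂) * σ (σ d₂) * (σ (σ a₂))⁻¹ + a₁ * σ (σ a₂) * σ (σ d₁) * (σ (σ a₂))⁻¹ + a₁ * σ (σ a₂) * σ (σ d₂) * (σ (σ a₂))⁻¹ + α * d₂ * σ (σ a₁) * σ (σ a₂) * (σ (σ a₂))⁻¹ + α * d₂ * σ (σ a₂) + d₁ * σ α * σ (σ a₂) + d₁ * σ (σ a₁) * σ (σ a₂) * (σ (σ a₂))⁻¹ + d₁ * σ (σ a₂)) * hJ1 + (a₁ * σ α * σ (σ d₂) + a₁ * σ (σ d₁) + a₁ * σ (σ d₂) + a₂ * α * σ (σ d₁) + a₂ * α * σ (σ d₂) + α * d₂ * σ (σ a₁) + d₁ * σ (σ a₁)) * hJ3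
      exact (mul_eq_zero.mp (key.trans hB2)).resolve_right (mul_ne_zero ha2 hssa2)
    rcases apn_kernelB1 htwo σ α (a₁ * a₂⁻¹) (d₁ * a₂⁻¹) (d₂ * a₂⁻¹) hfix hroot hE1' hE2' with
      ⟨h1, h2⟩ | ⟨h1, h2⟩
    · exact Or.inl ⟨(mul_eq_zero.mp h1).resolve_right (inv_ne_zero ha2),
        (mul_eq_zero.mp h2).resolve_right (inv_ne_zero ha2)⟩
    · exact Or.inr ⟨mul_right_cancel₀ (inv_ne_zero ha2) h1, (mul_inv_eq_one₀ ha2).mp h2⟩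


/-- Family F1: If gcd(k,m) = 1, q = 2^k and x^{q+1} + x + α has no root in
F_{2^m}, then F(x,y) = (x^{q+1} + x·y^q + α·y^{q+1},
x^{q²+1} + α·x^{q²}·y + (1+α)^q·x·y^{q²} + α·y^{q²+1}) is APN on F_{2^m} × F_{2^m}. -/
theorem stmt_4 (k m : ℕ) (hk : 0 < k) (hm : 0 < m) (hgcd : Nat.gcd k m = 1)
    (K : Type*) [Field K] [Fintype K] [CharP K 2] (hcard : Fintype.card K = 2 ^ m)
    (q : ℕ) (hq : q = 2 ^ k) (α : K)
    (hα : ∀ x : K, x ^ (q + 1) + x + α ≠ 0)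
    (F : K × K → K × K)
    (hF : ∀ x y : K, F (x, y) =
      (x ^ (q + 1) + x * y ^ q + α * y ^ (q + 1),
       x ^ (q ^ 2 + 1) + α * x ^ (q ^ 2) * y + (1 + α) ^ q * x * y ^ (q ^ 2)
         + α * y ^ (q ^ 2 + 1))) :
    ∀ a : K × K, a ≠ 0 → ∀ b : K × K,
      {x : K × K | F (x + a) + F x = b}.ncard ≤ 2 := by
  haveI : Fact (Nat.Prime 2) := ⟨by norm_num⟩
  have htwo : (2 : K) = 0 := by
    have := CharP.cast_eq_zero K 2
    exact_mod_cast this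
  set σ : K →+* K := iterateFrobenius K 2 k with hσdef
  have hσ : ∀ t : K, σ t = t ^ q := fun t => by
    rw [hσdef, iterateFrobenius_def, hq]
  have hroot : ∀ t : K, σ t * t + t + α ≠ 0 := by
    intro t
    have := hα t
    rw [pow_succ] at this
    rw [hσ t]
    exact this
  have hfix : ∀ t : K, σ t = t → t = 0 ∨ t = 1 := by
    intro t ht
    rw [hσ t] at ht
    have hmfix : t ^ (2 : ℕ) ^ m = t := by rw [← hcard]; exact FiniteField.pow_card t
    have hkfix : t ^ (2 : ℕ) ^ k = t := by rw [← hq]; exact ht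
    have iter : ∀ (n j : ℕ), t ^ (2 : ℕ) ^ n = t → t ^ (2 : ℕ) ^ (n * j) = t := by
      intro n j hs
      induction j with
      | zero => simpa using rfl
      | succ j ih =>
        rw [Nat.mul_succ, pow_add, pow_mul, ih, hs]
    have ht2 : t ^ (2 : ℕ) = t := by
      by_cases hm1 : m = 1
      · rw [hm1] at hmfix; simpa using hmfix
      · have hm2 : 1 < m := lt_of_le_of_ne hm (Ne.symm hm1)
        obtain ⟨c, -, hc⟩ := Nat.exists_mul_mod_eq_one_of_coprime hgcd hm2
        have h1 : t ^ (2 : ℕ) ^ (k * c) = t := iter k c hkfix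
        have h2 : t ^ (2 : ℕ) ^ (m * (k * c / m)) = t := iter m _ hmfix
        have hdiv : k * c = m * (k * c / m) + 1 := by
          conv_lhs => rw [← Nat.div_add_mod (k * c) m]
          rw [hc]
        calc t ^ (2 : ℕ)
            = (t ^ (2 : ℕ) ^ (m * (k * c / m))) ^ (2 : ℕ) := by rw [h2]
          _ = t ^ ((2 : ℕ) ^ (m * (k * c / m)) * 2) := (pow_mul t _ 2).symm
          _ = t ^ (2 : ℕ) ^ (m * (k * c / m) + 1) := by rw [pow_succ]
          _ = t := by rw [← hdiv]; exact h1
    have : t * (t - 1) = 0 := by linear_combination ht2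
    rcases mul_eq_zero.mp this with h | h
    · exact Or.inl h
    · exact Or.inr (by linear_combination h)
  intro u hu b
  obtain ⟨a1, a2⟩ := u
  have hane : ¬(a1 = 0 ∧ a2 = 0) := by
    rintro ⟨h1, h2⟩
    exact hu (by rw [h1, h2]; rfl)
  by_cases hS : {x : K × K | F (x + (a1, a2)) + F x = b}.Nonempty
  · obtain ⟨v1, hv1⟩ := hS
    obtain ⟨p, r⟩ := v1
    have hne : ((p, r) : K × K) ≠ (p, r) + (a1, a2) := by
      rw [Prod.mk_add_mk]
      intro h
      have e1 : p = p + a1 := congrArg Prod.fst h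
      have e2 : r = r + a2 := congrArg Prod.snd h
      exact hane ⟨by linear_combination (-1 : K) * e1, by linear_combination (-1 : K) * e2⟩
    apply le_trans (Set.ncard_le_ncard ?_ (Set.toFinite _))
      (le_of_eq (Set.ncard_pair hne))
    intro v2 hv2
    obtain ⟨s, t⟩ := v2
    simp only [Set.mem_setOf_eq, Prod.mk_add_mk] at hv1 hv2
    rw [hF, hF] at hv1 hv2
    rw [Prod.mk_add_mk] at hv1 hv2
    obtain ⟨h11, h12⟩ := Prod.ext_iff.mp hv1
    obtain ⟨h21, h22⟩ := Prod.ext_iff.mp hv2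
    have hc1 := h11.trans h21.symm
    have hc2 := h12.trans h22.symm
    have hpow1 : ∀ t : K, t ^ (q + 1) = σ t * t := fun t => by rw [hσ, pow_succ]
    have hpow3 : ∀ t : K, t ^ (q ^ 2 + 1) = σ (σ t) * t := fun t => by
      rw [hσ, hσ, pow_succ, pow_two, pow_mul]
    have hpow2 : ∀ t : K, t ^ (q ^ 2) = σ (σ t) := fun t => by
      rw [hσ, hσ, pow_two, pow_mul]
    have hpowq : ∀ t : K, t ^ q = σ t := fun t => (hσ t).symm
    simp only [hpow3, hpow1, hpow2, hpowq, map_add, map_mul, map_one] at hc1 hc2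
    have hB1 : a1 * (σ p + σ s) + (σ a1 + σ a2) * (p + s) + (a1 + α * a2) * (σ r + σ t)
        + α * (σ a2 * (r + t)) = 0 := by
      linear_combination hc1 + (a1 * σ s + a1 * σ t + a2 * α * σ t + (-1 : K) * α * r * σ r + α * σ a2 * t + α * σ t * t + (-1 : K) * p * σ p + (-1 : K) * p * σ r + s * σ a1 + s * σ a2 + s * σ s + s * σ t) * htwo
    have hB2 : (a1 + α * a2) * (σ (σ p) + σ (σ s)) + (σ (σ a1) + (1 + σ α) * σ (σ a2)) * (p + s)
        + ((1 + σ α) * a1 + α * a2) * (σ (σ r) + σ (σ t)) + α * ((σ (σ a1) + σ (σ a2)) * (r + t)) = 0 := by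
      linear_combination hc2 + (a1 * σ α * σ (σ t) + a1 * σ (σ s) + a1 * σ (σ t) + a2 * α * σ (σ s) + a2 * α * σ (σ t) + (-1 : K) * α * r * σ (σ p) + (-1 : K) * α * r * σ (σ r) + α * σ (σ a1) * t + α * σ (σ a2) * t + α * σ (σ s) * t + α * σ (σ t) * t + (-1 : K) * p * σ α * σ (σ r) + (-1 : K) * p * σ (σ p) + (-1 : K) * p * σ (σ r) + s * σ α * σ (σ a2) + s * σ α * σ (σ t) + s * σ (σ a1) + s * σ (σ a2) + s * σ (σ s) + s * σ (σ t)) * htwo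
    have hker := apn_kernelGen htwo σ α a1 a2 (p + s) (r + t) hfix hroot hane
      (by simp only [map_add]; linear_combination hB1)
      (by simp only [map_add]; linear_combination hB2)
    rcases hker with ⟨h1, h2⟩ | ⟨h1, h2⟩
    · left
      have hs : s = p := by linear_combination h1 - p * htwo
      have ht' : t = r := by linear_combination h2 - r * htwo
      rw [hs, ht']
    · right
      have hs : s = p + a1 := by linear_combination h1 - p * htwo
      have ht' : t = r + a2 := by linear_combination h2 - r * htwo
      rw [Prod.mk_add_mk, hs, ht']
      exact rfl
  · rw [Set.not_nonempty_iff_eq_empty.mp hS]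
    simp
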